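/- For all integers a, b ≥ 0 and every integer r with 1 ≤ r ≤ a + b + 1, one has c_{a,b}^r = Σ_{0≤α≤a, 0≤β≤b, α+β+1=r} c_{α,β}^r − Σ_{0≤α<a, 0≤β≤b, α+β+1=r} c_{β,α}^r + 2·(−1)^r·( 𝟙(a ≥ r) − 𝟙(b ≥ r) ), where 𝟙(A) equals 1 if the statement A is true and 0 otherwise. -/
import Mathlib


/-- The rational numbers `c_{a,b}^r = 2·(−1)^r·( C(2r, 2b+2) − (1 − 2^{−2r})·C(2r, 2a+1) )`
appearing in Zagier's formula. -/
def cZ (a b r : ℕ) : ℚ :=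
  2 * (-1) ^ r * (((2 * r).choose (2 * b + 2) : ℚ)
    - (1 - (2 : ℚ) ^ (-(2 * (r : ℤ)))) * ((2 * r).choose (2 * a + 1) : ℚ))

lemma cZ_filt (A b r : ℕ) :
    ((Finset.range A) ×ˢ (Finset.range (b + 1))).filter (fun p => p.1 + p.2 + 1 = r)
      = (Finset.Ico (r - 1 - b) (min A r)).image (fun α => (α, r - 1 - α)) := by
  ext ⟨x, y⟩
  simp only [Finset.mem_filter, Finset.mem_product, Finset.mem_range, Finset.mem_image,
    Finset.mem_Ico, Prod.mk.injEq, lt_min_iff]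
  constructor
  · rintro ⟨⟨hx, hy⟩, h⟩
    exact ⟨x, ⟨by omega, hx, by omega⟩, rfl, by omega⟩
  · rintro ⟨α, ⟨h1, h2, h3⟩, rfl, rfl⟩
    refine ⟨⟨h2, by omega⟩, by omega⟩

lemma cZ_tele (n L N : ℕ) (h : L ≤ N) :
    ∑ α ∈ Finset.Ico L N, ((n.choose (2 * α) : ℚ) - n.choose (2 * α + 2))
      = n.choose (2 * L) - n.choose (2 * N) := by
  induction N with
  | zero =>
    have : L = 0 := by omega
    subst this; simp
  | succ N ih =>
    rcases Nat.lt_or_ge L (N + 1) with h1 | h1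
    · have hLN : L ≤ N := by omega
      rw [Finset.sum_Ico_succ_top hLN, ih hLN]
      have h2 : 2 * (N + 1) = 2 * N + 2 := by ring
      rw [h2]; ring
    · have : L = N + 1 := by omega
      subst this; simp

lemma cZ_diff (L N r : ℕ) (c : ℚ) (h : L ≤ N) :
    (∑ α ∈ Finset.Ico L N, (((2 * r).choose (2 * α) : ℚ)
        - c * ((2 * r).choose (2 * α + 1))))
      - (∑ α ∈ Finset.Ico L N, (((2 * r).choose (2 * α + 2) : ℚ)
        - c * ((2 * r).choose (2 * α + 1))))
      = ((2 * r).choose (2 * L) : ℚ) - (2 * r).choose (2 * N) := by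
  rw [← Finset.sum_sub_distrib, ← cZ_tele (2 * r) L N h]
  exact Finset.sum_congr rfl fun α _ => by ring

lemma cZ_key (a b r : ℕ) (hr : 1 ≤ r) (hr' : r ≤ a + b + 1) (c : ℚ) :
    (∑ α ∈ Finset.Ico (r - 1 - b) (min (a + 1) r),
        (((2 * r).choose (2 * α) : ℚ) - c * ((2 * r).choose (2 * α + 1))))
      - (∑ α ∈ Finset.Ico (r - 1 - b) (min a r),
        (((2 * r).choose (2 * α + 2) : ℚ) - c * ((2 * r).choose (2 * α + 1))))
      + ((if r ≤ a then (1 : ℚ) else 0) - (if r ≤ b then (1 : ℚ) else 0))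
      = ((2 * r).choose (2 * b + 2) : ℚ) - c * ((2 * r).choose (2 * a + 1)) := by
  set L := r - 1 - b with hL
  have hLr : L < r := by omega
  rcases le_or_gt r a with h | h
  · -- case `r ≤ a`
    rw [min_eq_right (by omega : r ≤ a + 1), min_eq_right h, if_pos h,
      cZ_diff L r r c hLr.le]
    have ha0 : ((2 * r).choose (2 * a + 1) : ℚ) = 0 := by
      rw [Nat.choose_eq_zero_of_lt (by omega)]; norm_num
    have h2r : (2 * r).choose (2 * r) = 1 := Nat.choose_self _
    rcases le_or_gt r b with hb | hb
    · have hL0 : L = 0 := by omega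
      have hb0 : (2 * r).choose (2 * b + 2) = 0 := Nat.choose_eq_zero_of_lt (by omega)
      rw [if_pos hb, hL0, ha0, hb0, h2r]
      norm_num
    · have hsym : (2 * r).choose (2 * L) = (2 * r).choose (2 * b + 2) := by
        have h2L : 2 * L = 2 * r - (2 * b + 2) := by omega
        rw [h2L, Nat.choose_symm (by omega)]
      rw [if_neg (by omega), hsym, ha0, h2r]
      push_cast; ring
  · -- case `a < r`
    rw [min_eq_left (by omega : a + 1 ≤ r), min_eq_left h.le, if_neg (by omega)]
    have hLa : L ≤ a := by omega
    rw [Finset.sum_Ico_succ_top hLa, add_sub_right_comm, cZ_diff L a r c hLa]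
    rcases le_or_gt r b with hb | hb
    · have hL0 : L = 0 := by omega
      have hb0 : (2 * r).choose (2 * b + 2) = 0 := Nat.choose_eq_zero_of_lt (by omega)
      rw [if_pos hb, hL0, hb0]
      norm_num
      ring
    · have hsym : (2 * r).choose (2 * L) = (2 * r).choose (2 * b + 2) := by
        have h2L : 2 * L = 2 * r - (2 * b + 2) := by omega
        rw [h2L, Nat.choose_symm (by omega)]
      rw [if_neg (by omega), hsym]
      ring

/-- For all `a, b ≥ 0` and `1 ≤ r ≤ a + b + 1`,
`c_{a,b}^r = Σ_{0≤α≤a, 0≤β≤b, α+β+1=r} c_{α,β}^r − Σ_{0≤α<a, 0≤β≤b, α+β+1=r} c_{β,α}^r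
 + 2·(−1)^r·(𝟙(a ≥ r) − 𝟙(b ≥ r))`. -/
theorem cZ_recursion (a b r : ℕ) (hr : 1 ≤ r) (hr' : r ≤ a + b + 1) :
    cZ a b r =
      (∑ p ∈ (Finset.range (a + 1) ×ˢ Finset.range (b + 1)).filter
          (fun p => p.1 + p.2 + 1 = r), cZ p.1 p.2 r)
      - (∑ p ∈ (Finset.range a ×ˢ Finset.range (b + 1)).filter
          (fun p => p.1 + p.2 + 1 = r), cZ p.2 p.1 r)
      + 2 * (-1) ^ r * ((if r ≤ a then (1 : ℚ) else 0) - (if r ≤ b then (1 : ℚ) else 0)) := by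
  have hinj : ∀ x ∈ Finset.Ico (r - 1 - b) (min (a + 1) r),
      ∀ y ∈ Finset.Ico (r - 1 - b) (min (a + 1) r),
      (fun α => (α, r - 1 - α)) x = (fun α => (α, r - 1 - α)) y → x = y :=
    fun x _ y _ h => (Prod.ext_iff.mp h).1
  have hinj' : ∀ x ∈ Finset.Ico (r - 1 - b) (min a r),
      ∀ y ∈ Finset.Ico (r - 1 - b) (min a r),
      (fun α => (α, r - 1 - α)) x = (fun α => (α, r - 1 - α)) y → x = y :=
    fun x _ y _ h => (Prod.ext_iff.mp h).1
  have e1 : (∑ p ∈ (Finset.range (a + 1) ×ˢ Finset.range (b + 1)).filter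
        (fun p => p.1 + p.2 + 1 = r), cZ p.1 p.2 r)
      = ∑ α ∈ Finset.Ico (r - 1 - b) (min (a + 1) r),
          2 * (-1) ^ r * (((2 * r).choose (2 * α) : ℚ)
            - (1 - (2 : ℚ) ^ (-(2 * (r : ℤ)))) * ((2 * r).choose (2 * α + 1))) := by
    rw [cZ_filt (a + 1) b r, Finset.sum_image hinj]
    refine Finset.sum_congr rfl fun α hα => ?_
    have hα' : α < r := by
      have := (Finset.mem_Ico.mp hα).2
      omega
    unfold cZ
    have h2 : 2 * (r - 1 - α) + 2 = 2 * r - 2 * α := by omega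
    rw [h2, Nat.choose_symm (by omega : 2 * α ≤ 2 * r)]
  have e2 : (∑ p ∈ (Finset.range a ×ˢ Finset.range (b + 1)).filter
        (fun p => p.1 + p.2 + 1 = r), cZ p.2 p.1 r)
      = ∑ α ∈ Finset.Ico (r - 1 - b) (min a r),
          2 * (-1) ^ r * (((2 * r).choose (2 * α + 2) : ℚ)
            - (1 - (2 : ℚ) ^ (-(2 * (r : ℤ)))) * ((2 * r).choose (2 * α + 1))) := by
    rw [cZ_filt a b r, Finset.sum_image hinj']
    refine Finset.sum_congr rfl fun α hα => ?_
    have hα' : α < r := by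
      have := (Finset.mem_Ico.mp hα).2
      omega
    unfold cZ
    have h2 : 2 * (r - 1 - α) + 1 = 2 * r - (2 * α + 1) := by omega
    rw [h2, Nat.choose_symm (by omega : 2 * α + 1 ≤ 2 * r)]
  rw [e1, e2, ← Finset.mul_sum, ← Finset.mul_sum, ← mul_sub, ← mul_add]
  unfold cZ
  exact congrArg (2 * (-1) ^ r * ·) (cZ_key a b r hr hr' _).symm
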